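/- Let t > 0 and x, y ∈ ℝ^d. Define G_t^{α_o,H}(x,y) = Σ_{ε∈{−1,1}^d} G_t(εx, y), where G_t is the Hermite heat kernel on ℝ^d and εx = (ε₁x₁,…,ε_dx_d). Then for x, y ∈ (0,∞)^d, G_t^{α_o,H}(x,y) equals (sinh 2t)^{-d} exp(-(1/2)coth(2t)(‖x‖²+‖y‖²)) ∏_{i=1}^d √(x_i y_i) I_{-1/2}(x_i y_i / sinh 2t), where I_{-1/2}(z) = √(2/(πz)) cosh z. -/

import Mathlib

open Real

/-- The Hermite heat kernel on ℝ^d, written with explicit coordinate sums. -/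
noncomputable def hermiteHeat (d : ℕ) (t : ℝ) (u v : Fin d → ℝ) : ℝ :=
  (2 * Real.pi * Real.sinh (2 * t)) ^ (-(d : ℝ) / 2) *
    Real.exp (-(1 / 4) * (Real.tanh t * ∑ i, (u i + v i) ^ 2 +
      (Real.cosh t / Real.sinh t) * ∑ i, (u i - v i) ^ 2))

theorem stmt_19 (d : ℕ) (hd : 1 ≤ d) (t : ℝ) (ht : 0 < t) (x y : Fin d → ℝ)
    (hx : ∀ i, 0 < x i) (hy : ∀ i, 0 < y i) :
    (∑ ε : Fin d → Bool,
        hermiteHeat d t (fun i => if ε i then x i else -x i) y) =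
      (Real.sinh (2 * t)) ^ (-(d : ℝ)) *
        Real.exp (-(1 / 2) * (Real.cosh (2 * t) / Real.sinh (2 * t)) *
          ((∑ i, x i ^ 2) + ∑ i, y i ^ 2)) *
        ∏ i, Real.sqrt (x i * y i) *
          (Real.sqrt (2 / (Real.pi * (x i * y i / Real.sinh (2 * t)))) *
            Real.cosh (x i * y i / Real.sinh (2 * t))) := by
  have hπ : 0 < Real.pi := Real.pi_pos
  have hs : 0 < Real.sinh (2 * t) := Real.sinh_pos_iff.mpr (by linarith)
  have hsh : 0 < Real.sinh t := Real.sinh_pos_iff.mpr ht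
  have hch : 0 < Real.cosh t := Real.cosh_pos t
  set s := Real.sinh (2 * t) with hs_def
  have h1 : Real.cosh t ^ 2 - Real.sinh t ^ 2 = 1 := Real.cosh_sq_sub_sinh_sq t
  have hs2 : s = 2 * Real.sinh t * Real.cosh t := by
    rw [hs_def, Real.sinh_two_mul]
  have hc2 : Real.cosh (2 * t) = Real.cosh t ^ 2 + Real.sinh t ^ 2 := Real.cosh_two_mul t
  set F := Real.exp (-(1 / 2) * (Real.cosh (2 * t) / s) *
      ((∑ i, x i ^ 2) + ∑ i, y i ^ 2)) with hF
  set C := (2 * Real.pi * s) ^ (-(d : ℝ) / 2) * F with hC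
  have key : ∀ ε : Fin d → Bool,
      hermiteHeat d t (fun i => if ε i then x i else -x i) y
        = C * ∏ i, Real.exp ((if ε i then (1 : ℝ) else -1) * (x i * y i / s)) := by
    intro ε
    have hpt : ∀ i : Fin d,
        -(1 / 4) * (Real.tanh t * ((if ε i then x i else -x i) + y i) ^ 2 +
          (Real.cosh t / Real.sinh t) * ((if ε i then x i else -x i) - y i) ^ 2)
          = -(1 / 2) * (Real.cosh (2 * t) / s) * (x i ^ 2 + y i ^ 2) +
            (if ε i then (1 : ℝ) else -1) * (x i * y i / s) := by
      intro i
      rw [Real.tanh_eq_sinh_div_cosh, hc2, hs2]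
      cases hb : ε i <;> simp only [reduceIte, Bool.false_eq_true, if_false]
      · field_simp
        ring_nf
        linear_combination (-8 * x i * y i) * h1
      · field_simp
        ring_nf
        linear_combination (8 * x i * y i) * h1
    have hE : -(1 / 4) * (Real.tanh t * ∑ i, ((if ε i then x i else -x i) + y i) ^ 2 +
          (Real.cosh t / Real.sinh t) * ∑ i, ((if ε i then x i else -x i) - y i) ^ 2)
        = -(1 / 2) * (Real.cosh (2 * t) / s) * ((∑ i, x i ^ 2) + ∑ i, y i ^ 2) +
            ∑ i, (if ε i then (1 : ℝ) else -1) * (x i * y i / s) := by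
      calc -(1 / 4) * (Real.tanh t * ∑ i, ((if ε i then x i else -x i) + y i) ^ 2 +
            (Real.cosh t / Real.sinh t) * ∑ i, ((if ε i then x i else -x i) - y i) ^ 2)
          = ∑ i, -(1 / 4) * (Real.tanh t * ((if ε i then x i else -x i) + y i) ^ 2 +
              (Real.cosh t / Real.sinh t) * ((if ε i then x i else -x i) - y i) ^ 2) := by
            rw [Finset.mul_sum (f := fun i => ((if ε i then x i else -x i) + y i) ^ 2),
              Finset.mul_sum (f := fun i => ((if ε i then x i else -x i) - y i) ^ 2),
              ← Finset.sum_add_distrib, Finset.mul_sum]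
        _ = ∑ i, (-(1 / 2) * (Real.cosh (2 * t) / s) * (x i ^ 2 + y i ^ 2) +
              (if ε i then (1 : ℝ) else -1) * (x i * y i / s)) :=
            Finset.sum_congr rfl fun i _ => hpt i
        _ = -(1 / 2) * (Real.cosh (2 * t) / s) * ((∑ i, x i ^ 2) + ∑ i, y i ^ 2) +
              ∑ i, (if ε i then (1 : ℝ) else -1) * (x i * y i / s) := by
            rw [Finset.sum_add_distrib, ← Finset.mul_sum, ← Finset.sum_add_distrib]
    rw [hermiteHeat, ← hs_def, hE, Real.exp_add, Real.exp_sum, hC, hF]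
    ring
  rw [Finset.sum_congr rfl fun ε _ => key ε, ← Finset.mul_sum]
  have hsum : (∑ ε : Fin d → Bool,
      ∏ i, Real.exp ((if ε i then (1 : ℝ) else -1) * (x i * y i / s)))
      = ∏ i, (2 * Real.cosh (x i * y i / s)) := by
    have hps := Finset.prod_univ_sum (t := fun _ : Fin d => (Finset.univ : Finset Bool))
      (f := fun i b => Real.exp ((if b then (1 : ℝ) else -1) * (x i * y i / s)))
    rw [Fintype.piFinset_univ] at hps
    rw [← hps]
    refine Finset.prod_congr rfl fun i _ => ?_
    rw [Fintype.sum_bool]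
    simp only [reduceIte, Bool.false_eq_true, if_false, one_mul, neg_one_mul, Real.cosh_eq]
    ring
  rw [hsum]
  have hfac : ∀ i : Fin d, Real.sqrt (x i * y i) *
      (Real.sqrt (2 / (Real.pi * (x i * y i / s))) * Real.cosh (x i * y i / s))
      = Real.sqrt (2 * s / Real.pi) * Real.cosh (x i * y i / s) := by
    intro i
    have hxy : 0 < x i * y i := mul_pos (hx i) (hy i)
    rw [← mul_assoc, ← Real.sqrt_mul hxy.le]
    congr 2
    field_simp
    ring
    field_simp [(hx i).ne', (hy i).ne']
  rw [Finset.prod_congr rfl fun i _ => hfac i, Finset.prod_mul_distrib,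
    Finset.prod_mul_distrib, Finset.prod_const, Finset.prod_const, Finset.card_univ,
    Fintype.card_fin]
  have hconst : (2 * Real.pi * s) ^ (-(d : ℝ) / 2) * 2 ^ d
      = s ^ (-(d : ℝ)) * Real.sqrt (2 * s / Real.pi) ^ d := by
    have h2πs : (0 : ℝ) < 2 * Real.pi * s := by positivity
    have e1 : (2 * Real.pi * s) ^ (-(d : ℝ) / 2)
        = ((2 * Real.pi * s) ^ (-(1 : ℝ) / 2)) ^ d := by
      rw [← Real.rpow_natCast ((2 * Real.pi * s) ^ (-(1 : ℝ) / 2)) d,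
        ← Real.rpow_mul h2πs.le]
      ring_nf
    have e2 : s ^ (-(d : ℝ)) = (s⁻¹) ^ d := by
      rw [Real.rpow_neg hs.le, Real.rpow_natCast, inv_pow]
    rw [e1, e2, ← mul_pow, ← mul_pow]
    congr 1
    have hsq : Real.sqrt (2 * Real.pi * s) * Real.sqrt (2 * s / Real.pi) = 2 * s := by
      rw [← Real.sqrt_mul (by positivity),
        show (2 * Real.pi * s) * (2 * s / Real.pi) = (2 * s) ^ 2 by field_simp,
        Real.sqrt_sq (by positivity)]
    have e3 : (2 * Real.pi * s) ^ (-(1 : ℝ) / 2) = (Real.sqrt (2 * Real.pi * s))⁻¹ := by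
      rw [show (-(1 : ℝ) / 2) = -(1 / 2) by norm_num, Real.rpow_neg h2πs.le,
        Real.sqrt_eq_rpow]
    rw [e3]
    have hsqp : 0 < Real.sqrt (2 * Real.pi * s) := Real.sqrt_pos.mpr h2πs
    rw [inv_mul_eq_div, inv_mul_eq_div, div_eq_div_iff hsqp.ne' hs.ne']
    linear_combination -hsq
  calc C * (2 ^ d * ∏ i, Real.cosh (x i * y i / s))
      = ((2 * Real.pi * s) ^ (-(d : ℝ) / 2) * 2 ^ d) * F *
          ∏ i, Real.cosh (x i * y i / s) := by rw [hC]; ring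
    _ = (s ^ (-(d : ℝ)) * Real.sqrt (2 * s / Real.pi) ^ d) * F *
          ∏ i, Real.cosh (x i * y i / s) := by rw [hconst]
    _ = s ^ (-(d : ℝ)) * F * (Real.sqrt (2 * s / Real.pi) ^ d *
          ∏ i, Real.cosh (x i * y i / s)) := by ring
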